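/- For all integers m, n ≥ 1, the determinant of the distance matrix D(K_{m,n}) of the complete bipartite graph K_{m,n} equals (-2)^{m+n-2} · (4(m-1)(n-1) - mn). -/

import Mathlib

/-- For all integers `m, n ≥ 1`, the determinant of the distance matrix of the complete
bipartite graph `K_{m,n}` equals `(-2)^(m+n-2) * (4(m-1)(n-1) - mn)`. Vertices are
`Fin (m+n)`; the first part consists of indices `< m`. -/
theorem det_distanceMatrix_Kmn (m n : ℕ) (hm : 1 ≤ m) (hn : 1 ≤ n)
    (D : Matrix (Fin (m + n)) (Fin (m + n)) ℝ)
    (hD : ∀ i j : Fin (m + n), D i j =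
      if i = j then 0 else if (i.val < m ↔ j.val < m) then 2 else 1) :
    D.det = (-2) ^ (m + n - 2) * (4 * ((m : ℝ) - 1) * ((n : ℝ) - 1) - (m : ℝ) * n) := by
  classical
  set u : Fin (m + n) → ℝ := fun i => if (i : ℕ) < m then 1 else 0 with hu
  set v : Fin (m + n) → ℝ := fun i => if (i : ℕ) < m then 0 else 1 with hv
  set A : Matrix (Fin (m + n)) (Fin 2) ℝ := fun i k => if k = 0 then u i else v i with hA
  set B : Matrix (Fin 2) (Fin (m + n)) ℝ :=
    fun k j => if k = 0 then -(u j + v j / 2) else -(u j / 2 + v j) with hB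
  -- key sum lemma
  have key : ∀ (c1 c2 : ℝ),
      (∑ j : Fin (m + n), (if (j : ℕ) < m then c1 else c2)) = c1 * m + c2 * n := by
    intro c1 c2
    rw [Fin.sum_univ_eq_sum_range (fun j => if j < m then c1 else c2)]
    rw [Finset.sum_ite, Finset.sum_const, Finset.sum_const]
    have h1 : Finset.filter (fun j => j < m) (Finset.range (m + n)) = Finset.range m := by
      ext x; simp; omega
    have h2 : Finset.filter (fun j => ¬ j < m) (Finset.range (m + n)) = Finset.Ico m (m + n) := by
      ext x; simp; omega
    rw [h1, h2]
    simp [Nat.add_sub_cancel_left, mul_comm]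
  have hDeq : D = (-2 : ℝ) • (1 + A * B) := by
    ext i j
    rw [hD]
    simp only [Matrix.smul_apply, Matrix.add_apply, Matrix.mul_apply, Fin.sum_univ_two]
    by_cases h1 : (i : ℕ) < m <;> by_cases h2 : (j : ℕ) < m <;> by_cases hij : i = j <;>
      simp [Matrix.smul_apply, Matrix.add_apply, Matrix.one_apply, Matrix.mul_apply,
        Fin.sum_univ_two, hA, hB, hu, hv, h1, h2, hij] <;>
      first
        | ring
        | (exfalso; omega)
        | (exfalso; exact h2 (hij ▸ h1))
        | (exfalso; exact h1 (hij ▸ h2))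
  rw [hDeq, Matrix.det_smul, Matrix.det_one_add_mul_comm]
  -- compute entries of B * A
  have e00 : (B * A) 0 0 = -(m : ℝ) := by
    rw [Matrix.mul_apply]
    have : ∀ j : Fin (m + n), B 0 j * A j 0 = (if (j : ℕ) < m then (-1 : ℝ) else 0) := by
      intro j; by_cases h : (j : ℕ) < m <;> simp [hA, hB, hu, hv, h] <;> norm_num
    rw [Finset.sum_congr rfl fun j _ => this j, key]; ring
  have e01 : (B * A) 0 1 = -(n : ℝ) / 2 := by
    rw [Matrix.mul_apply]
    have : ∀ j : Fin (m + n), B 0 j * A j 1 = (if (j : ℕ) < m then (0 : ℝ) else -1/2) := by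
      intro j; by_cases h : (j : ℕ) < m <;> simp [hA, hB, hu, hv, h] <;> norm_num
    rw [Finset.sum_congr rfl fun j _ => this j, key]; ring
  have e10 : (B * A) 1 0 = -(m : ℝ) / 2 := by
    rw [Matrix.mul_apply]
    have : ∀ j : Fin (m + n), B 1 j * A j 0 = (if (j : ℕ) < m then (-1/2 : ℝ) else 0) := by
      intro j; by_cases h : (j : ℕ) < m <;> simp [hA, hB, hu, hv, h] <;> norm_num
    rw [Finset.sum_congr rfl fun j _ => this j, key]; ring
  have e11 : (B * A) 1 1 = -(n : ℝ) := by
    rw [Matrix.mul_apply]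
    have : ∀ j : Fin (m + n), B 1 j * A j 1 = (if (j : ℕ) < m then (0 : ℝ) else -1) := by
      intro j; by_cases h : (j : ℕ) < m <;> simp [hA, hB, hu, hv, h] <;> norm_num
    rw [Finset.sum_congr rfl fun j _ => this j, key]; ring
  rw [Matrix.det_fin_two]
  simp only [Matrix.add_apply, Matrix.one_apply, e00, e01, e10, e11]
  norm_num
  have hk : m + n = (m + n - 2) + 2 := by omega
  rw [hk, pow_add]
  push_cast
  ring
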